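/- Let B be a ring and a, b, c ∈ B such that 1 + a*c and 1 + b*a are invertible and a*c = c*a. Then (1 + a*b)*(1 + b*a)⁻¹ = (1 + a*(b + c + b*a*c))*(1 + (b + c + b*a*c)*a)⁻¹. (In particular (1+a*b)*(1+a*c) = 1 + a*(b+c+b*a*c) and (1+b*a)*(1+c*a) = 1 + (b+c+b*a*c)*a.) -/
import Mathlib

/-- Vaserstein's lemma: if `1 + a*c` and `1 + b*a` are invertible and `a*c = c*a` then
`(1+ab)(1+ba)⁻¹ = (1 + a(b+c+bac))(1 + (b+c+bac)a)⁻¹`; in particular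
`(1+ab)(1+ac) = 1 + a(b+c+bac)` and `(1+ba)(1+ca) = 1 + (b+c+bac)a`. -/
theorem stmt2 {B : Type*} [Ring B] (a b c : B)
    (hac : IsUnit (1 + a * c)) (hba : IsUnit (1 + b * a)) (hcomm : a * c = c * a) :
    (1 + a * b) * Ring.inverse (1 + b * a) =
        (1 + a * (b + c + b * a * c)) * Ring.inverse (1 + (b + c + b * a * c) * a) ∧
      (1 + a * b) * (1 + a * c) = 1 + a * (b + c + b * a * c) ∧
      (1 + b * a) * (1 + c * a) = 1 + (b + c + b * a * c) * a := by
  have h2 : (1 + a * b) * (1 + a * c) = 1 + a * (b + c + b * a * c) := by noncomm_ring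
  have h3 : (1 + b * a) * (1 + c * a) = 1 + (b + c + b * a * c) * a := by noncomm_ring
  refine ⟨?_, h2, h3⟩
  have hca : (1 : B) + c * a = 1 + a * c := by rw [hcomm]
  obtain ⟨u, hu⟩ := hba
  obtain ⟨v, hv⟩ := hac
  have hv' : ((u * v : Bˣ) : B) = 1 + (b + c + b * a * c) * a := by
    rw [← h3, Units.val_mul, hu, hv, hca]
  rw [← h2, ← hu, ← hv', Ring.inverse_unit, Ring.inverse_unit, mul_inv_rev,
    Units.val_mul, mul_assoc, ← hv, Units.mul_inv_cancel_left]
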